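/- Let β, r, θ, c > 0, assume at least one of the conditions (a) 0 < r ≤ 1 and 0 < θ ≤ 1 + β - r; (b) 0 < r < 1, 1 + β - r < θ ≤ (1 + β - r)²/β, and c ≥ θ/(1 + β - r) - 1; (c) 0 < r < 1, θ > (1 + β - r)²/β, and c ≥ (√β - √θ)²/(1 - r) holds, and assume in addition that either β ≤ r or θ ≥ (β - r)(1 + c). Then the set M = {(u,v) ∈ ℝ² : 0 ≤ u ≤ 1 and 0 ≤ v ≤ 2 - u} is invariant under V₁, i.e. V₁(M) ⊆ M. -/

import Mathlib

/-- The map `V₁(u,v) = (u(2-u) - u v, β u v + (1-r) v - θ u v/(1 + c u))`. -/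
noncomputable def V1 (β r θ c : ℝ) (p : ℝ × ℝ) : ℝ × ℝ :=
  (p.1 * (2 - p.1) - p.1 * p.2,
   β * p.1 * p.2 + (1 - r) * p.2 - θ * p.1 * p.2 / (1 + c * p.1))

/-- The set `M = {(u,v) : 0 ≤ u ≤ 1, 0 ≤ v ≤ 2 - u}`. -/
def Mset : Set (ℝ × ℝ) :=
  {p : ℝ × ℝ | 0 ≤ p.1 ∧ p.1 ≤ 1 ∧ 0 ≤ p.2 ∧ p.2 ≤ 2 - p.1}

private lemma caseA_aux (β r θ c u : ℝ) (hβ : 0 < β) (hc : 0 < c)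
    (hu0 : 0 ≤ u) (hu1 : u ≤ 1) (h1r : 0 ≤ 1 - r) (ha2 : θ ≤ 1 + β - r) :
    θ * u ≤ (β * u + (1 - r)) * (1 + c * u) := by
  nlinarith [mul_nonneg (mul_nonneg hβ.le hc.le) (mul_nonneg hu0 hu0),
    mul_nonneg h1r (mul_nonneg hc.le hu0),
    mul_nonneg h1r (sub_nonneg.2 hu1),
    mul_nonneg hu0 (sub_nonneg.2 ha2)]

private lemma caseB_aux (β r θ c u : ℝ) (hβ : 0 < β) (hr : 0 < r) (hθ : 0 < θ)
    (hc : 0 < c) (hu0 : 0 ≤ u) (hu1 : u ≤ 1) (hb1 : r < 1)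
    (hb2 : 1 + β - r < θ) (hb3 : θ ≤ (1 + β - r) ^ 2 / β)
    (hb4 : θ / (1 + β - r) - 1 ≤ c) :
    θ * u ≤ (β * u + (1 - r)) * (1 + c * u) := by
  have hs : (0:ℝ) < 1 + β - r := by linarith
  have hβθ : β * θ ≤ (1 + β - r) ^ 2 := by
    rw [le_div_iff₀ hβ] at hb3; linarith
  have hcs : θ - (1 + β - r) ≤ c * (1 + β - r) := by
    rw [sub_le_iff_le_add, div_le_iff₀ hs] at hb4; linarith
  nlinarith [mul_nonneg (by nlinarith : (0:ℝ) ≤ β * u + (1 - r))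
      (mul_nonneg hu0 (by linarith : (0:ℝ) ≤ c * (1 + β - r) - (θ - (1 + β - r)))),
    mul_nonneg (sub_nonneg.2 hu1) (by nlinarith : (0:ℝ) ≤ (1 + β - r)^2 - β * θ),
    mul_nonneg (mul_nonneg hβ.le (by linarith : (0:ℝ) ≤ θ - (1 + β - r)))
      (sq_nonneg (1 - u)), hs.le]

private lemma caseC_aux (β r θ c u : ℝ) (hβ : 0 < β) (hr : 0 < r) (hθ : 0 < θ)
    (hc : 0 < c) (hu0 : 0 ≤ u) (hu1 : u ≤ 1) (hc1 : r < 1)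
    (hc3 : (Real.sqrt β - Real.sqrt θ) ^ 2 / (1 - r) ≤ c) :
    θ * u ≤ (β * u + (1 - r)) * (1 + c * u) := by
  have h1r : (0:ℝ) < 1 - r := by linarith
  set a := Real.sqrt β with ha
  set b := Real.sqrt θ with hb
  set e := Real.sqrt c with he
  set f := Real.sqrt (1 - r) with hf
  have ha2 : a ^ 2 = β := Real.sq_sqrt hβ.le
  have hb2 : b ^ 2 = θ := Real.sq_sqrt hθ.le
  have he2 : e ^ 2 = c := Real.sq_sqrt hc.le
  have hf2 : f ^ 2 = 1 - r := Real.sq_sqrt h1r.le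
  have ha0 : 0 ≤ a := Real.sqrt_nonneg _
  have hb0 : 0 ≤ b := Real.sqrt_nonneg _
  have he0 : 0 ≤ e := Real.sqrt_nonneg _
  have hf0 : 0 ≤ f := Real.sqrt_nonneg _
  have hcr : (a - b) ^ 2 ≤ c * (1 - r) := by
    rw [div_le_iff₀ h1r] at hc3; linarith
  have hef : (a - b) ^ 2 ≤ (e * f) ^ 2 := by
    rw [mul_pow, he2, hf2]; exact hcr
  have hab : b ≤ a + e * f := by
    nlinarith [mul_nonneg he0 hf0, hef]
  have key1 : 2 * a * e * f * u ≤ a ^ 2 * e ^ 2 * u ^ 2 + f ^ 2 := by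
    nlinarith [sq_nonneg (a * e * u - f)]
  have key3 : b ^ 2 * u ≤ (a + e * f) ^ 2 * u :=
    mul_le_mul_of_nonneg_right (pow_le_pow_left₀ hb0 hab 2) hu0
  rw [← ha2, ← hb2, ← he2, ← hf2]
  nlinarith [key1, key3]

private lemma upper_aux (β r θ c u : ℝ) (hβ : 0 < β) (hr : 0 < r) (hθ : 0 < θ)
    (hc : 0 < c) (hu0 : 0 ≤ u) (hu1 : u ≤ 1)
    (hextra : β ≤ r ∨ (β - r) * (1 + c) ≤ θ) :
    (β * u - r) * (1 + c * u) ≤ θ * u := by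
  have hD : (0:ℝ) < 1 + c * u := by nlinarith
  rcases hextra with h | h
  · nlinarith [mul_nonneg (by nlinarith : (0:ℝ) ≤ r - β * u) hD.le,
      mul_nonneg hθ.le hu0]
  · nlinarith [mul_nonneg (sub_nonneg.2 hu1)
      (by positivity : (0:ℝ) ≤ r + β * c * u),
      mul_nonneg hu0 (sub_nonneg.2 h)]

/-- Under one of nonnegativity conditions (a), (b), (c) and the extra assumption
`β ≤ r` or `θ ≥ (β - r)(1 + c)`, the set `M` is invariant under `V₁`. -/
theorem Mset_invariant_V1 (β r θ c : ℝ) (hβ : 0 < β) (hr : 0 < r)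
    (hθ : 0 < θ) (hc : 0 < c)
    (hcond :
      (r ≤ 1 ∧ θ ≤ 1 + β - r) ∨
      (r < 1 ∧ 1 + β - r < θ ∧ θ ≤ (1 + β - r) ^ 2 / β ∧
        θ / (1 + β - r) - 1 ≤ c) ∨
      (r < 1 ∧ (1 + β - r) ^ 2 / β < θ ∧
        (Real.sqrt β - Real.sqrt θ) ^ 2 / (1 - r) ≤ c))
    (hextra : β ≤ r ∨ (β - r) * (1 + c) ≤ θ) :
    ∀ p ∈ Mset, V1 β r θ c p ∈ Mset := by
  rintro ⟨u, v⟩ ⟨hu0, hu1, hv0, hv2⟩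
  simp only [Mset, V1, Set.mem_setOf_eq] at *
  have hD : 0 < 1 + c * u := by nlinarith
  have h1r : 0 ≤ 1 - r := by
    rcases hcond with ⟨h, _⟩ | ⟨h, _⟩ | ⟨h, _⟩ <;> linarith
  have hH : θ * u ≤ (β * u + (1 - r)) * (1 + c * u) := by
    rcases hcond with ⟨ha1, ha2⟩ | ⟨hb1, hb2, hb3, hb4⟩ | ⟨hc1, hc2, hc3⟩
    · exact caseA_aux β r θ c u hβ hc hu0 hu1 h1r ha2
    · exact caseB_aux β r θ c u hβ hr hθ hc hu0 hu1 hb1 hb2 hb3 hb4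
    · exact caseC_aux β r θ c u hβ hr hθ hc hu0 hu1 hc1 hc3
  have hG1 : (β * u - r) * (1 + c * u) ≤ θ * u :=
    upper_aux β r θ c u hβ hr hθ hc hu0 hu1 hextra
  set G := β * u + (1 - r) - θ * u / (1 + c * u) with hGdef
  have hG0 : 0 ≤ G := by
    rw [hGdef, sub_nonneg, div_le_iff₀ hD]; linarith
  have hGle : G ≤ 1 := by
    have : 1 ≤ (β * u + (1 - r)) - (β * u - r) := by linarith
    have h2 : (β * u - r) ≤ θ * u / (1 + c * u) := by
      rw [le_div_iff₀ hD]; exact hG1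
    rw [hGdef]; linarith
  have hv' : β * u * v + (1 - r) * v - θ * u * v / (1 + c * u) = v * G := by
    rw [hGdef]; field_simp
  refine ⟨by nlinarith, by nlinarith [sq_nonneg (1 - u)], ?_, ?_⟩
  · rw [hv']; exact mul_nonneg hv0 hG0
  · rw [hv']
    rcases le_or_gt G u with h | h
    · nlinarith [mul_nonneg hv0 (sub_nonneg.2 h)]
    · nlinarith [mul_nonneg (by linarith : (0:ℝ) ≤ 2 - u - v) (by linarith : (0:ℝ) ≤ G - u),
        mul_nonneg (by linarith : (0:ℝ) ≤ 2 - u) (by linarith : (0:ℝ) ≤ 1 - G)]
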